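/- Let T be a lattice triangle whose centroid is a lattice point. If the lattice length of one side of T is a multiple of 3, then the lattice lengths of all three sides of T are multiples of 3. -/

import Mathlib

/-- Lattice length of the segment joining two lattice points. -/
def llen (P Q : ℤ × ℤ) : ℕ := Int.gcd (P.1 - Q.1) (P.2 - Q.2)

/-- Integer dot product on `ℤ × ℤ`. -/
def dotv (u v : ℤ × ℤ) : ℤ := u.1 * v.1 + u.2 * v.2

/-- The three vertices are not collinear (a genuine triangle). -/
def Noncollinear (V₀ V₁ V₂ : ℤ × ℤ) : Prop :=
  (V₁.1 - V₀.1) * (V₂.2 - V₀.2) - (V₂.1 - V₀.1) * (V₁.2 - V₀.2) ≠ 0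

/-- All three interior angles are strictly acute (positive dot products at each vertex). -/
def IsAcute (V₀ V₁ V₂ : ℤ × ℤ) : Prop :=
  0 < dotv (V₁ - V₀) (V₂ - V₀) ∧ 0 < dotv (V₀ - V₁) (V₂ - V₁) ∧
    0 < dotv (V₀ - V₂) (V₁ - V₂)

/-- `H` is the orthocenter of the triangle `V₀V₁V₂`. -/
def IsOrthocenter (H V₀ V₁ V₂ : ℤ × ℤ) : Prop :=
  dotv (H - V₀) (V₁ - V₂) = 0 ∧ dotv (H - V₁) (V₂ - V₀) = 0 ∧
    dotv (H - V₂) (V₀ - V₁) = 0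

/-- `F` is the circumcenter of the triangle `V₀V₁V₂` (equidistant from the vertices). -/
def IsCircumcenter (F V₀ V₁ V₂ : ℤ × ℤ) : Prop :=
  dotv (F - V₀) (F - V₀) = dotv (F - V₁) (F - V₁) ∧
    dotv (F - V₀) (F - V₀) = dotv (F - V₂) (F - V₂)

/-- Lattice perimeter of a lattice triangle. -/
def latPerim (V₀ V₁ V₂ : ℤ × ℤ) : ℕ := llen V₀ V₁ + llen V₁ V₂ + llen V₀ V₂

/-- The interior angle of the triangle at vertex `V`, with the other vertices `A`, `B`. -/
noncomputable def angleAt (V A B : ℤ × ℤ) : ℝ :=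
  Real.arccos ((((A.1 - V.1) * (B.1 - V.1) + (A.2 - V.2) * (B.2 - V.2) : ℤ) : ℝ) /
    (Real.sqrt (((A.1 - V.1) ^ 2 + (A.2 - V.2) ^ 2 : ℤ)) *
      Real.sqrt (((B.1 - V.1) ^ 2 + (B.2 - V.2) ^ 2 : ℤ))))

lemma llen_dvd3 (P Q : ℤ × ℤ) :
    3 ∣ llen P Q ↔ (3 : ℤ) ∣ (P.1 - Q.1) ∧ (3 : ℤ) ∣ (P.2 - Q.2) := by
  constructor
  · intro h
    have h' : (3 : ℤ) ∣ (llen P Q : ℤ) := by exact_mod_cast h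
    exact ⟨h'.trans (Int.gcd_dvd_left (P.1 - Q.1) (P.2 - Q.2)), h'.trans (Int.gcd_dvd_right (P.1 - Q.1) (P.2 - Q.2))⟩
  · rintro ⟨h1, h2⟩
    have := Int.dvd_coe_gcd h1 h2
    exact_mod_cast this

theorem stmt13 (V : Fin 3 → ℤ × ℤ) (hT : Noncollinear (V 0) (V 1) (V 2))
    (hG : (3 : ℤ) ∣ ((V 0).1 + (V 1).1 + (V 2).1) ∧ (3 : ℤ) ∣ ((V 0).2 + (V 1).2 + (V 2).2))
    (hside : ∃ i : Fin 3, 3 ∣ llen (V (i + 1)) (V (i + 2))) :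
    ∀ i : Fin 3, 3 ∣ llen (V (i + 1)) (V (i + 2)) := by
  obtain ⟨hx, hy⟩ := hG
  obtain ⟨i, hi⟩ := hside
  rw [llen_dvd3] at hi
  intro j
  rw [llen_dvd3]
  fin_cases i <;> fin_cases j <;>
    simp only [Fin.mk_zero, Fin.mk_one, show (⟨2, by norm_num⟩ : Fin 3) = 2 from rfl,
      Fin.reduceAdd] at hi ⊢ <;>
    obtain ⟨h1, h2⟩ := hi <;> constructor <;> omega
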